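/- Let τ: [0,T] → [0,T] be nondecreasing and right-continuous with left-continuous inverse τ⁻¹, let σ > 0, and set f ≡ σ²/(1+σ²) on [0,T]² with T = 1. Then the function g(t,s) := −𝟙_{t < τ⁻¹(s)} · σ²/(1 + σ²(1 + s − τ⁻¹(s))) satisfies, for all 0 ≤ s ≤ t ≤ 1 with t < τ⁻¹(s), the equation σ²/(1+σ²) + g(t,s) = (σ²/(1+σ²)) ∫ₛ^{τ⁻¹(s)} g(u,s) du. -/

import Mathlib

open MeasureTheory

/-- The explicit kernel `g(t,s) = −𝟙_{t<τ⁻¹(s)} σ²/(1+σ²(1+s−τ⁻¹(s)))`. -/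
noncomputable def gker (σ : ℝ) (τinv : ℝ → ℝ) (t s : ℝ) : ℝ :=
  if t < τinv s then -(σ ^ 2 / (1 + σ ^ 2 * (1 + s - τinv s))) else 0

/-- The explicit kernel `g` solves the Fredholm part of the kernel equation in
the computational example with constant kernel `f ≡ σ²/(1+σ²)` (`T = 1`):
for `0 ≤ s ≤ t ≤ 1` with `t < τ⁻¹(s)`,
`σ²/(1+σ²) + g(t,s) = (σ²/(1+σ²)) ∫ₛ^{τ⁻¹(s)} g(u,s) du`. -/
theorem gker_solves_fredholm_part
    (σ : ℝ) (hσ : 0 < σ) (τinv : ℝ → ℝ)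
    (hτ1 : ∀ s : ℝ, s ≤ τinv s) (hτ2 : ∀ s ∈ Set.Icc (0:ℝ) 1, τinv s ≤ 1) :
    ∀ s t : ℝ, 0 ≤ s → s ≤ t → t ≤ 1 → t < τinv s →
      σ ^ 2 / (1 + σ ^ 2) + gker σ τinv t s
        = (σ ^ 2 / (1 + σ ^ 2)) * ∫ u in Set.Icc s (τinv s), gker σ τinv u s := by
  intro s t hs hst ht1 htτ
  set b := τinv s with hb
  set c : ℝ := σ ^ 2 / (1 + σ ^ 2 * (1 + s - b)) with hc
  have hsb : s ≤ b := hτ1 s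
  have hb1 : b ≤ 1 := hτ2 s ⟨hs, le_trans hst ht1⟩
  have hint : (∫ u in Set.Icc s b, gker σ τinv u s) = (b - s) * (-c) := by
    have h1 : ∀ u : ℝ, gker σ τinv u s = (Set.Iio b).indicator (fun _ => -c) u := by
      intro u
      simp only [gker, Set.indicator, Set.mem_Iio, hc, hb]
    simp_rw [h1]
    rw [MeasureTheory.setIntegral_indicator measurableSet_Iio]
    have : Set.Icc s b ∩ Set.Iio b = Set.Ico s b := by
      ext x
      simp only [Set.mem_inter_iff, Set.mem_Icc, Set.mem_Iio, Set.mem_Ico]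
      exact ⟨fun ⟨⟨h1, _⟩, h3⟩ => ⟨h1, h3⟩, fun ⟨h1, h2⟩ => ⟨⟨h1, le_of_lt h2⟩, h2⟩⟩
    rw [this, MeasureTheory.setIntegral_const, MeasureTheory.measureReal_def, Real.volume_Ico,
      ENNReal.toReal_ofReal (by linarith), smul_eq_mul]
  rw [hint]
  have hg : gker σ τinv t s = -c := by simp only [gker, if_pos (show t < τinv s from htτ), hc, hb]
  rw [hg]
  have hd1 : (0:ℝ) < 1 + σ ^ 2 := by positivity
  have hd2 : (0:ℝ) < 1 + σ ^ 2 * (1 + s - b) := by nlinarith [sq_nonneg σ]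
  rw [hc]
  field_simp
  ring
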